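/- Let ℓ, κ ≥ 1 be integers with μ := ℓ - 4κ - 4 ≥ 0. Say ω ∈ ℕ has property P if for every ω₀ ∈ {0, …, 2^μ - 1} there exists an odd integer M with 1 ≤ M < 2^{5κ+7} such that all binary digits of M·(2^μ·ω + ω₀) at indices in [ℓ-κ, ℓ) are zero. Then the number of ω ∈ {0, …, 2^{4κ+4} - 1} with property P is at least 2^{3κ+4}·(2^κ - 1). -/

import Mathlib

private lemma win_iff (a b x : ℕ) : x / 2 ^ a % 2 ^ b = 0 ↔ x % 2 ^ (a + b) < 2 ^ a := by
  rw [← Nat.mod_mul_right_div_self, ← pow_add]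
  exact Nat.div_eq_zero_iff_lt (Nat.pow_pos (by norm_num))

private lemma stepA (κ μ : ℕ) (hκ : 1 ≤ κ) (n q δ : ℕ)
    (hn : n < 2 ^ (μ + (4 * κ + 4)))
    (hq1 : 1 ≤ q) (hq2 : q ≤ 2 ^ (κ + 1))
    (hδ1 : 2 ^ (μ + κ) ≤ δ) (hδ2 : δ ≤ 2 ^ (μ + 3 * κ + 3))
    (hstep : (2 * n * q) % 2 ^ (μ + (4 * κ + 4)) = δ ∨
             (2 * n * q) % 2 ^ (μ + (4 * κ + 4)) = 2 ^ (μ + (4 * κ + 4)) - δ) :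
    ∃ M, M % 2 = 1 ∧ 1 ≤ M ∧ M < 2 ^ (5 * κ + 7) ∧
      (M * n) % 2 ^ (μ + (4 * κ + 4)) < 2 ^ (μ + 3 * κ + 4) := by
  set m : ℕ := 2 ^ (μ + (4 * κ + 4)) with hm
  have hδpos : 0 < δ := lt_of_lt_of_le (Nat.pow_pos (by norm_num)) hδ1
  have hsmall : 2 ^ (μ + 3 * κ + 3) < m := by
    apply Nat.pow_lt_pow_right (by norm_num); omega
  have hsmall4 : 2 ^ (μ + 3 * κ + 4) ≤ m := by
    apply Nat.pow_le_pow_right (by norm_num); omega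
  have hδm : δ < m := lt_of_le_of_lt hδ2 hsmall
  by_cases hsm : n < 2 ^ (μ + 3 * κ + 4)
  · refine ⟨1, rfl, le_refl 1, Nat.one_lt_two_pow (by omega), ?_⟩
    rw [one_mul, Nat.mod_eq_of_lt hn]; exact hsm
  · push_neg at hsm
    -- bound on the number of steps
    have hdivb : ∀ k : ℕ, k ≤ m → k / δ ≤ 2 ^ (3 * κ + 4) := by
      intro k hk
      calc k / δ ≤ m / δ := Nat.div_le_div_right hk
        _ ≤ m / 2 ^ (μ + κ) := Nat.div_le_div_left hδ1 (Nat.pow_pos (by norm_num))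
        _ = 2 ^ (3 * κ + 4) := by
            rw [hm, show μ + (4 * κ + 4) = (μ + κ) + (3 * κ + 4) by omega, pow_add,
              Nat.mul_div_cancel_left _ (Nat.pow_pos (by norm_num))]
    have hMbound : ∀ i : ℕ, i ≤ 2 ^ (3 * κ + 4) + 1 → 2 * (q * i) + 1 < 2 ^ (5 * κ + 7) := by
      intro i hi
      have h1 : q * i ≤ 2 ^ (κ + 1) * (2 ^ (3 * κ + 4) + 1) := Nat.mul_le_mul hq2 hi
      have h2 : (2:ℕ) ^ (κ + 1) * (2 ^ (3 * κ + 4) + 1) = 2 ^ (4 * κ + 5) + 2 ^ (κ + 1) := by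
        rw [Nat.mul_add, mul_one, ← pow_add]; congr 2; omega
      have h3 : (2:ℕ) ^ (κ + 1) ≤ 2 ^ (4 * κ + 5) := Nat.pow_le_pow_right (by norm_num) (by omega)
      have h4 : (2:ℕ) ^ (4 * κ + 5) * 4 ≤ 2 ^ (5 * κ + 7) := by
        calc (2:ℕ) ^ (4 * κ + 5) * 4 = 2 ^ (4 * κ + 7) := by rw [show (4:ℕ) = 2^2 by norm_num, ← pow_add]
          _ ≤ 2 ^ (5 * κ + 7) := Nat.pow_le_pow_right (by norm_num) (by omega)
      have hbig : 4 * 2 ^ (κ + 1) ≤ 2 ^ (4 * κ + 5) := by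
        calc 4 * 2 ^ (κ + 1) = 2 ^ (κ + 3) := by rw [show (4:ℕ) = 2^2 by norm_num, ← pow_add]; congr 1; omega
          _ ≤ 2 ^ (4 * κ + 5) := Nat.pow_le_pow_right (by norm_num) (by omega)
      omega
    have hoddM : ∀ i : ℕ, (2 * (q * i) + 1) % 2 = 1 := by intro i; omega
    rcases hstep with he | he
    · -- positive step: increase until wrap-around
      set k : ℕ := m - n with hk
      set i : ℕ := k / δ + 1 with hi
      have hiδ : i * δ = δ * (k / δ) + δ := by rw [hi]; ring
      have hdm := Nat.div_add_mod k δ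
      have hmod := Nat.mod_lt k hδpos
      -- k ≤ i*δ ≤ k + δ
      have hk1 : k ≤ i * δ := by omega
      have hk2 : i * δ ≤ k + δ := by omega
      have hib : i ≤ 2 ^ (3 * κ + 4) + 1 := by
        have := hdivb k (by omega); omega
      refine ⟨2 * (q * i) + 1, hoddM i, by omega, hMbound i hib, ?_⟩
      have hMn : (2 * (q * i) + 1) * n = i * (2 * n * q) + n := by ring
      have hcong : (i * (2 * n * q) + n) % m = (i * δ + n) % m := by
        have h1 : (2 * n * q) % m = δ % m := by rw [he, Nat.mod_eq_of_lt hδm]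
        have h2 : i * (2 * n * q) ≡ i * δ [MOD m] := Nat.ModEq.mul_left i h1
        exact h2.add_right n
      rw [hMn, hcong]
      have hlt2 : i * δ + n < 2 * m := by omega
      have hge : m ≤ i * δ + n := by omega
      have hfin : (i * δ + n) % m = i * δ + n - m := by
        rw [Nat.mod_eq_sub_mod hge]
        exact Nat.mod_eq_of_lt (by omega)
      rw [hfin]
      have hef : (2:ℕ) ^ (μ + 3 * κ + 3) < 2 ^ (μ + 3 * κ + 4) :=
        Nat.pow_lt_pow_right (by norm_num) (by omega)
      omega
    · -- negative step: decrease until below the window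
      set k : ℕ := n - 2 ^ (μ + 3 * κ + 4) with hk
      set i : ℕ := k / δ + 1 with hi
      have hiδ : i * δ = δ * (k / δ) + δ := by rw [hi]; ring
      have hdm := Nat.div_add_mod k δ
      have hmod := Nat.mod_lt k hδpos
      have hk1 : k < i * δ := by omega
      have hk2 : i * δ ≤ k + δ := by omega
      have hiδn : i * δ ≤ n := by
        have : δ ≤ 2 ^ (μ + 3 * κ + 4) := le_trans hδ2 (Nat.pow_le_pow_right (by norm_num) (by omega))
        omega
      have hib : i ≤ 2 ^ (3 * κ + 4) + 1 := by
        have := hdivb k (by omega); omega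
      refine ⟨2 * (q * i) + 1, hoddM i, by omega, hMbound i hib, ?_⟩
      have hMn : (2 * (q * i) + 1) * n = i * (2 * n * q) + n := by ring
      have hcong : (i * (2 * n * q) + n) % m = (i * (m - δ) + n) % m := by
        have h1 : (2 * n * q) % m = (m - δ) % m := by rw [he, Nat.mod_eq_of_lt (by omega)]
        exact (Nat.ModEq.mul_left i h1).add_right n
      rw [hMn, hcong]
      have hexp : i * (m - δ) + i * δ = i * m := by rw [← Nat.mul_add, Nat.sub_add_cancel (le_of_lt hδm)]
      have hrewrite : i * (m - δ) + n = (n - i * δ) + i * m := by omega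
      have hfin : ((n - i * δ) + i * m) % m = n - i * δ := by
        rw [Nat.add_mul_mod_self_right]
        exact Nat.mod_eq_of_lt (by omega)
      rw [hrewrite, hfin]
      omega


private lemma dirichlet (A K x : ℕ) :
    ∃ q, 1 ≤ q ∧ q ≤ 2 ^ K ∧
      ((q * x) % 2 ^ (A + K) < 2 ^ A ∨
       2 ^ (A + K) - (q * x) % 2 ^ (A + K) < 2 ^ A) := by
  set N : ℕ := 2 ^ (A + K) with hN
  have hNpos : 0 < N := Nat.pow_pos (by norm_num)
  have hApos : 0 < (2:ℕ) ^ A := Nat.pow_pos (by norm_num)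
  have hNeq : N = 2 ^ A * 2 ^ K := by rw [hN, pow_add]
  have main : ∀ a b : ℕ, a < b → b < 2 ^ K + 1 →
      ((a * x) % N) / 2 ^ A = ((b * x) % N) / 2 ^ A →
      ∃ q, 1 ≤ q ∧ q ≤ 2 ^ K ∧
        ((q * x) % N < 2 ^ A ∨ N - (q * x) % N < 2 ^ A) := by
    intro a b hab hb hbucket
    refine ⟨b - a, by omega, by omega, ?_⟩
    set e1 : ℕ := (a * x) % N with he1
    set e2 : ℕ := (b * x) % N with he2
    set g : ℕ := ((b - a) * x) % N with hg
    have hsplit : e2 = (g + e1) % N := by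
      rw [he2, show b * x = (b - a) * x + a * x by rw [← Nat.add_mul]; congr 1; omega,
        Nat.add_mod]
    have he1N : e1 < N := Nat.mod_lt _ hNpos
    have he2N : e2 < N := Nat.mod_lt _ hNpos
    have hgN : g < N := Nat.mod_lt _ hNpos
    have hd1 := Nat.div_add_mod e1 (2 ^ A)
    have hd2 := Nat.div_add_mod e2 (2 ^ A)
    have hm1 : e1 % 2 ^ A < 2 ^ A := Nat.mod_lt _ hApos
    have hm2 : e2 % 2 ^ A < 2 ^ A := Nat.mod_lt _ hApos
    have hsame : 2 ^ A * (e1 / 2 ^ A) = 2 ^ A * (e2 / 2 ^ A) := by rw [hbucket]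
    rcases Nat.lt_or_ge (g + e1) N with hcase | hcase
    · rw [Nat.mod_eq_of_lt hcase] at hsplit
      left
      -- g = e2 - e1, same bucket ⇒ small
      omega
    · have : (g + e1) % N = g + e1 - N := by
        rw [Nat.mod_eq_sub_mod hcase]
        exact Nat.mod_eq_of_lt (by omega)
      rw [this] at hsplit
      right
      omega
  obtain ⟨q1, hq1, q2, hq2, hne, heq⟩ :=
    Finset.exists_ne_map_eq_of_card_lt_of_maps_to
      (f := fun a => ((a * x) % N) / 2 ^ A)
      (by simp : (Finset.range (2 ^ K)).card < (Finset.range (2 ^ K + 1)).card)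
      (fun a _ => Finset.mem_range.2 (Nat.div_lt_of_lt_mul
        (by rw [← hNeq]; exact Nat.mod_lt _ hNpos)))
  rw [Finset.mem_range] at hq1 hq2
  rcases Nat.lt_or_ge q1 q2 with hlt | hge
  · exact main q1 q2 hlt hq2 heq
  · exact main q2 q1 (by omega) hq1 heq.symm


private lemma step3 (κ μ ω ω₀ q : ℕ) (hκ : 1 ≤ κ)
    (hω₀ : ω₀ < 2 ^ μ) (hq1 : 1 ≤ q) (hq2 : q ≤ 2 ^ (κ + 1))
    (h : (2 * (2 ^ μ * ω + ω₀) * q) % 2 ^ (μ + (4 * κ + 4)) < 2 ^ (μ + κ) ∨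
         2 ^ (μ + (4 * κ + 4)) - (2 * (2 ^ μ * ω + ω₀) * q) % 2 ^ (μ + (4 * κ + 4)) < 2 ^ (μ + κ)) :
    (q * ω) % 2 ^ (4 * κ + 3) < 2 ^ (κ - 1) ∨
      2 ^ (4 * κ + 3) < (q * ω) % 2 ^ (4 * κ + 3) + 2 ^ (κ - 1) + q := by
  set m : ℕ := 2 ^ (μ + (4 * κ + 4)) with hm
  set y : ℕ := (q * ω) % 2 ^ (4 * κ + 3) with hy
  set t : ℕ := 2 * q * ω₀ with ht
  have hmN : m = 2 ^ (μ + 1) * 2 ^ (4 * κ + 3) := by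
    rw [hm, ← pow_add]; try (congr 1 <;> omega)
  have hA : (2 ^ (μ + 1) * (q * ω)) % m = 2 ^ (μ + 1) * y := by
    rw [hmN, Nat.mul_mod_mul_left]
  have h1 : (2 * (2 ^ μ * ω + ω₀) * q) % m = (2 ^ (μ + 1) * y + t) % m := by
    conv_lhs => rw [show 2 * (2 ^ μ * ω + ω₀) * q = 2 ^ (μ + 1) * (q * ω) + 2 * q * ω₀ by ring,
      ← Nat.mod_add_mod, hA]
  rw [h1] at h
  -- basic size facts
  have hyN : y < 2 ^ (4 * κ + 3) := Nat.mod_lt _ (Nat.pow_pos (by norm_num))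
  have hAm : 2 ^ (μ + 1) * y + 2 ^ (μ + 1) ≤ m := by
    rw [hmN]
    have : y + 1 ≤ 2 ^ (4 * κ + 3) := hyN
    calc 2 ^ (μ + 1) * y + 2 ^ (μ + 1) = 2 ^ (μ + 1) * (y + 1) := by ring
      _ ≤ 2 ^ (μ + 1) * 2 ^ (4 * κ + 3) := Nat.mul_le_mul_left _ this
  have htq : t < 2 ^ (μ + 1) * q := by
    rw [ht, show 2 ^ (μ + 1) * q = 2 * q * 2 ^ μ by ring]
    exact mul_lt_mul_of_pos_left hω₀ (by omega)
  have hqq : 2 ^ (μ + 1) * q ≤ 2 ^ (μ + 1) * 2 ^ (κ + 1) := Nat.mul_le_mul_left _ hq2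
  have hpk1 : (2:ℕ) ^ (μ + 1) * 2 ^ (κ - 1) = 2 ^ (μ + κ) := by
    rw [← pow_add]; try (congr 1 <;> omega)
  have hpk2 : (2:ℕ) ^ (μ + 1) * 2 ^ (κ + 1) = 2 ^ (μ + κ + 2) := by
    rw [← pow_add]; try (congr 1 <;> omega)
  have hpk3 : (2:ℕ) ^ (μ + κ + 2) ≤ 2 ^ (μ + 4 * κ + 3) :=
    Nat.pow_le_pow_right (by norm_num) (by omega)
  have hpk4 : (2:ℕ) ^ (μ + κ) ≤ 2 ^ (μ + 4 * κ + 3) :=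
    Nat.pow_le_pow_right (by norm_num) (by omega)
  have hpk5 : (2:ℕ) ^ (μ + 4 * κ + 3) * 2 = m := by
    rw [hm, ← pow_succ]; try (congr 1 <;> omega)
  -- case split on wrap-around
  rcases Nat.lt_or_ge (2 ^ (μ + 1) * y + t) m with hcase | hcase
  · rw [Nat.mod_eq_of_lt hcase] at h
    rcases h with h | h
    · -- A + t < 2^{μ+κ} : y small
      left
      have : 2 ^ (μ + 1) * y < 2 ^ (μ + 1) * 2 ^ (κ - 1) := by rw [hpk1]; omega
      exact Nat.lt_of_mul_lt_mul_left this
    · -- A + t close to m from below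
      right
      have hdist : 2 ^ (μ + 1) * (y + 2 ^ (κ - 1) + q)
          = 2 ^ (μ + 1) * y + 2 ^ (μ + κ) + 2 ^ (μ + 1) * q := by
        rw [Nat.mul_add, Nat.mul_add, hpk1]
      have : 2 ^ (μ + 1) * 2 ^ (4 * κ + 3) < 2 ^ (μ + 1) * (y + 2 ^ (κ - 1) + q) := by
        rw [hdist, ← hmN]; omega
      exact Nat.lt_of_mul_lt_mul_left this
  · -- wrapped
    have hlt2 : 2 ^ (μ + 1) * y + t < 2 * m := by omega
    have hmod : (2 ^ (μ + 1) * y + t) % m = 2 ^ (μ + 1) * y + t - m := by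
      rw [Nat.mod_eq_sub_mod hcase]
      exact Nat.mod_eq_of_lt (by omega)
    rw [hmod] at h
    rcases h with h | h
    · -- e small after wrap : y near the top
      right
      have hdist : 2 ^ (μ + 1) * (y + 2 ^ (κ - 1) + q)
          = 2 ^ (μ + 1) * y + 2 ^ (μ + κ) + 2 ^ (μ + 1) * q := by
        rw [Nat.mul_add, Nat.mul_add, hpk1]
      have hp0 : 0 < (2:ℕ) ^ (μ + κ) := Nat.pow_pos (by norm_num)
      have : 2 ^ (μ + 1) * 2 ^ (4 * κ + 3) < 2 ^ (μ + 1) * (y + 2 ^ (κ - 1) + q) := by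
        rw [hdist, ← hmN]; omega
      exact Nat.lt_of_mul_lt_mul_left this
    · -- impossible
      exfalso
      omega


private lemma step4 (κ q : ℕ) (hκ : 1 ≤ κ) (hq1 : 1 ≤ q) (hq2 : q ≤ 2 ^ (κ + 1)) :
    ((Finset.range (2 ^ (4 * κ + 4))).filter (fun ω =>
      (q * ω) % 2 ^ (4 * κ + 3) < 2 ^ (κ - 1) ∨
        2 ^ (4 * κ + 3) < (q * ω) % 2 ^ (4 * κ + 3) + 2 ^ (κ - 1) + q)).card
      ≤ 2 ^ (κ + 4) := by
  obtain ⟨a, u, hu, rfl⟩ := Nat.exists_eq_two_pow_mul_odd (show q ≠ 0 by omega)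
  have hu1 : 1 ≤ u := hu.pos
  have ha : a ≤ κ + 1 := by
    by_contra hcon
    have h1 : 2 ^ (κ + 2) ≤ 2 ^ a := Nat.pow_le_pow_right (by norm_num) (by omega)
    have h2 : 2 ^ a ≤ 2 ^ a * u := Nat.le_mul_of_pos_right _ (by omega)
    have h3 : (2:ℕ) ^ (κ + 1) < 2 ^ (κ + 2) := Nat.pow_lt_pow_right (by norm_num) (by omega)
    omega
  set b : ℕ := 4 * κ + 3 - a with hb
  have hab : a + b = 4 * κ + 3 := by omega
  have hbpos : 0 < (2:ℕ) ^ b := Nat.pow_pos (by norm_num)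
  have hapos : 0 < (2:ℕ) ^ a := Nat.pow_pos (by norm_num)
  have hsplitpow : (2:ℕ) ^ (4 * κ + 3) = 2 ^ a * 2 ^ b := by
    rw [← pow_add]; try (congr 1 <;> omega)
  have hy : ∀ ω : ℕ, (2 ^ a * u * ω) % 2 ^ (4 * κ + 3) = 2 ^ a * ((u * ω) % 2 ^ b) := by
    intro ω
    rw [show 2 ^ a * u * ω = 2 ^ a * (u * ω) by ring, hsplitpow, Nat.mul_mod_mul_left]
  set c : ℕ := 2 ^ (κ - 1) / 2 ^ a with hc
  clear_value c
  have hdm := Nat.div_add_mod (2 ^ (κ - 1)) (2 ^ a)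
  have hmm : 2 ^ (κ - 1) % 2 ^ a < 2 ^ a := Nat.mod_lt _ hapos
  have hcd1 : 2 ^ a * c ≤ 2 ^ (κ - 1) := by rw [hc]; omega
  have hcd2 : 2 ^ (κ - 1) < 2 ^ a * c + 2 ^ a := by rw [hc]; omega
  set Zg : Finset ℕ := (Finset.range (2 ^ b)).filter (fun z =>
    2 ^ a * z < 2 ^ (κ - 1) ∨ 2 ^ (4 * κ + 3) < 2 ^ a * z + 2 ^ (κ - 1) + 2 ^ a * u) with hZg
  have hinj : ((Finset.range (2 ^ (4 * κ + 4))).filter (fun ω =>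
      (2 ^ a * u * ω) % 2 ^ (4 * κ + 3) < 2 ^ (κ - 1) ∨
        2 ^ (4 * κ + 3) < (2 ^ a * u * ω) % 2 ^ (4 * κ + 3) + 2 ^ (κ - 1) + 2 ^ a * u)).card
      ≤ (Zg ×ˢ Finset.range (2 ^ (a + 1))).card := by
    apply Finset.card_le_card_of_injOn (fun ω => ((u * ω) % 2 ^ b, ω / 2 ^ b))
    · intro ω hω
      rw [Finset.mem_coe, Finset.mem_filter, Finset.mem_range] at hω
      obtain ⟨hω1, hω2⟩ := hω
      rw [hy ω] at hω2
      rw [Finset.mem_coe, Finset.mem_product]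
      constructor
      · rw [hZg, Finset.mem_filter, Finset.mem_range]
        exact ⟨Nat.mod_lt _ hbpos, hω2⟩
      · rw [Finset.mem_range]
        apply Nat.div_lt_of_lt_mul
        calc ω < 2 ^ (4 * κ + 4) := hω1
          _ = 2 ^ (a + 1) * 2 ^ b := by rw [← pow_add]; try (congr 1 <;> omega)
          _ = 2 ^ b * 2 ^ (a + 1) := by ring
    · intro ω1 h1 ω2 h2 heq
      simp only [Prod.mk.injEq] at heq
      obtain ⟨hmod, hdiv⟩ := heq
      have hco : Nat.Coprime (2 ^ b) u :=
        Nat.Coprime.pow_left b ((Nat.coprime_two_left).mpr hu)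
      have hcong : ω1 ≡ ω2 [MOD 2 ^ b] :=
        (show u * ω1 ≡ u * ω2 [MOD 2 ^ b] from hmod).cancel_left_of_coprime hco
      have hmod' : ω1 % 2 ^ b = ω2 % 2 ^ b := hcong
      calc ω1 = 2 ^ b * (ω1 / 2 ^ b) + ω1 % 2 ^ b := (Nat.div_add_mod _ _).symm
        _ = 2 ^ b * (ω2 / 2 ^ b) + ω2 % 2 ^ b := by rw [hdiv, hmod']
        _ = ω2 := Nat.div_add_mod _ _
  have hZcard : Zg.card ≤ 2 * c + u + 2 := by
    have hsub : Zg ⊆ Finset.range (c + 1) ∪ Finset.Ico (2 ^ b - (c + u + 1)) (2 ^ b) := by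
      intro z hz
      rw [hZg, Finset.mem_filter, Finset.mem_range] at hz
      obtain ⟨hz1, hz2⟩ := hz
      rw [Finset.mem_union, Finset.mem_range, Finset.mem_Ico]
      rcases hz2 with hz2 | hz2
      · left
        by_contra hcon
        push_neg at hcon
        have h1 : 2 ^ a * (c + 1) ≤ 2 ^ a * z := Nat.mul_le_mul_left _ (by omega)
        have hd : 2 ^ a * (c + 1) = 2 ^ a * c + 2 ^ a := by ring
        omega
      · right
        refine ⟨?_, hz1⟩
        by_contra hcon
        push_neg at hcon
        have h1 : 2 ^ a * (z + c + 1 + u) ≤ 2 ^ a * 2 ^ b :=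
          Nat.mul_le_mul_left _ (show z + c + 1 + u ≤ 2 ^ b by omega)
        have hd : 2 ^ a * (z + c + 1 + u) = 2 ^ a * z + (2 ^ a * c + 2 ^ a) + 2 ^ a * u := by ring
        rw [← hsplitpow] at h1
        omega
    have hcard2 : (Finset.Ico (2 ^ b - (c + u + 1)) (2 ^ b)).card ≤ c + u + 1 := by
      rw [Nat.card_Ico]; omega
    calc Zg.card ≤ (Finset.range (c + 1) ∪ Finset.Ico (2 ^ b - (c + u + 1)) (2 ^ b)).card :=
          Finset.card_le_card hsub
      _ ≤ (Finset.range (c + 1)).card + (Finset.Ico (2 ^ b - (c + u + 1)) (2 ^ b)).card :=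
          Finset.card_union_le _ _
      _ ≤ (c + 1) + (c + u + 1) := by rw [Finset.card_range]; omega
      _ = 2 * c + u + 2 := by omega
  calc ((Finset.range (2 ^ (4 * κ + 4))).filter (fun ω =>
      (2 ^ a * u * ω) % 2 ^ (4 * κ + 3) < 2 ^ (κ - 1) ∨
        2 ^ (4 * κ + 3) < (2 ^ a * u * ω) % 2 ^ (4 * κ + 3) + 2 ^ (κ - 1) + 2 ^ a * u)).card
      ≤ (Zg ×ˢ Finset.range (2 ^ (a + 1))).card := hinj
    _ = Zg.card * 2 ^ (a + 1) := by rw [Finset.card_product, Finset.card_range]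
    _ ≤ (2 * c + u + 2) * 2 ^ (a + 1) := Nat.mul_le_mul_right _ hZcard
    _ ≤ 2 ^ (κ + 4) := by
        have h2 : 2 ^ a * u ≤ 2 ^ (κ + 1) := hq2
        have h3 : (2:ℕ) ^ a ≤ 2 ^ (κ + 1) := Nat.pow_le_pow_right (by norm_num) (by omega)
        have hE : (2 * c + u + 2) * 2 ^ (a + 1)
            = 4 * (2 ^ a * c) + 2 * (2 ^ a * u) + 4 * 2 ^ a := by
          rw [pow_succ]; ring
        have h4 : (2:ℕ) ^ (κ - 1) * 2 = 2 ^ κ := by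
          rw [← pow_succ]; try (congr 1 <;> omega)
        have h5 : (2:ℕ) ^ (κ + 1) = 2 ^ κ * 2 := by rw [pow_succ]
        have h6 : (2:ℕ) ^ (κ + 4) = 2 ^ κ * 16 := by rw [pow_add]; norm_num
        omega

open Classical in
/-- Odd elimination lemma. -/
theorem thm14 (ℓ κ μ : ℕ) (hℓ : 1 ≤ ℓ) (hκ : 1 ≤ κ) (hμ : μ + (4 * κ + 4) = ℓ) :
    2 ^ (3 * κ + 4) * (2 ^ κ - 1) ≤
      ((Finset.range (2 ^ (4 * κ + 4))).filter fun ω =>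
        ∀ ω₀ < 2 ^ μ, ∃ M, M % 2 = 1 ∧ 1 ≤ M ∧ M < 2 ^ (5 * κ + 7) ∧
          (M * (2 ^ μ * ω + ω₀)) / 2 ^ (ℓ - κ) % 2 ^ κ = 0).card := by
  subst hμ
  simp only [show μ + (4 * κ + 4) - κ = μ + 3 * κ + 4 from by omega]
  have hpos : 0 < (2:ℕ) ^ (μ + (4 * κ + 4)) := Nat.pow_pos (by norm_num)
  -- every "bad" ω is localized near a rational with small denominator
  have hsub : (Finset.range (2 ^ (4 * κ + 4))).filter (fun ω =>
        ¬ (∀ ω₀ < 2 ^ μ, ∃ M, M % 2 = 1 ∧ 1 ≤ M ∧ M < 2 ^ (5 * κ + 7) ∧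
          (M * (2 ^ μ * ω + ω₀)) / 2 ^ (μ + 3 * κ + 4) % 2 ^ κ = 0)) ⊆
      (Finset.Icc 1 (2 ^ (κ + 1))).biUnion (fun q =>
        (Finset.range (2 ^ (4 * κ + 4))).filter (fun ω =>
          (q * ω) % 2 ^ (4 * κ + 3) < 2 ^ (κ - 1) ∨
            2 ^ (4 * κ + 3) < (q * ω) % 2 ^ (4 * κ + 3) + 2 ^ (κ - 1) + q)) := by
    intro ω hω
    rw [Finset.mem_filter, Finset.mem_range] at hω
    obtain ⟨hωlt, hnp⟩ := hω
    push_neg at hnp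
    obtain ⟨ω₀, hω₀, hM⟩ := hnp
    have hn : 2 ^ μ * ω + ω₀ < 2 ^ (μ + (4 * κ + 4)) := by
      calc 2 ^ μ * ω + ω₀ < 2 ^ μ * ω + 2 ^ μ := by omega
        _ = 2 ^ μ * (ω + 1) := by ring
        _ ≤ 2 ^ μ * 2 ^ (4 * κ + 4) := Nat.mul_le_mul_left _ (by omega)
        _ = 2 ^ (μ + (4 * κ + 4)) := by rw [← pow_add]
    have hgood : ∀ M, M % 2 = 1 → 1 ≤ M → M < 2 ^ (5 * κ + 7) →
        ¬ ((M * (2 ^ μ * ω + ω₀)) % 2 ^ (μ + (4 * κ + 4)) < 2 ^ (μ + 3 * κ + 4)) := by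
      intro M h1 h2 h3 hlt
      refine hM M h1 h2 h3 ?_
      refine (win_iff (μ + 3 * κ + 4) κ _).2 ?_
      rw [show μ + 3 * κ + 4 + κ = μ + (4 * κ + 4) from by omega]
      exact hlt
    obtain ⟨q, hq1, hq2, hd⟩ := dirichlet (μ + 3 * κ + 3) (κ + 1) (2 * (2 ^ μ * ω + ω₀))
    rw [show μ + 3 * κ + 3 + (κ + 1) = μ + (4 * κ + 4) from by omega,
      show q * (2 * (2 ^ μ * ω + ω₀)) = 2 * (2 ^ μ * ω + ω₀) * q from by ring] at hd
    have hbad : (2 * (2 ^ μ * ω + ω₀) * q) % 2 ^ (μ + (4 * κ + 4)) < 2 ^ (μ + κ) ∨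
        2 ^ (μ + (4 * κ + 4)) - (2 * (2 ^ μ * ω + ω₀) * q) % 2 ^ (μ + (4 * κ + 4))
          < 2 ^ (μ + κ) := by
      by_contra hcon
      push_neg at hcon
      obtain ⟨hc1, hc2⟩ := hcon
      have heN : (2 * (2 ^ μ * ω + ω₀) * q) % 2 ^ (μ + (4 * κ + 4)) < 2 ^ (μ + (4 * κ + 4)) :=
        Nat.mod_lt _ hpos
      rcases hd with hd | hd
      · obtain ⟨M, m1, m2, m3, m4⟩ := stepA κ μ hκ (2 ^ μ * ω + ω₀) q _ hn hq1 hq2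
          hc1 (le_of_lt hd) (Or.inl rfl)
        exact hgood M m1 m2 m3 m4
      · obtain ⟨M, m1, m2, m3, m4⟩ := stepA κ μ hκ (2 ^ μ * ω + ω₀) q
          (2 ^ (μ + (4 * κ + 4)) - (2 * (2 ^ μ * ω + ω₀) * q) % 2 ^ (μ + (4 * κ + 4)))
          hn hq1 hq2 hc2 (le_of_lt hd) (Or.inr (by omega))
        exact hgood M m1 m2 m3 m4
    have hloc := step3 κ μ ω ω₀ q hκ hω₀ hq1 hq2 hbad
    exact Finset.mem_biUnion.2 ⟨q, Finset.mem_Icc.2 ⟨hq1, hq2⟩,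
      Finset.mem_filter.2 ⟨Finset.mem_range.2 hωlt, hloc⟩⟩
  -- counting
  have hcount : ((Finset.range (2 ^ (4 * κ + 4))).filter (fun ω =>
        ¬ (∀ ω₀ < 2 ^ μ, ∃ M, M % 2 = 1 ∧ 1 ≤ M ∧ M < 2 ^ (5 * κ + 7) ∧
          (M * (2 ^ μ * ω + ω₀)) / 2 ^ (μ + 3 * κ + 4) % 2 ^ κ = 0))).card
      ≤ 2 ^ (κ + 1) * 2 ^ (κ + 4) := by
    calc ((Finset.range (2 ^ (4 * κ + 4))).filter _).card
        ≤ ((Finset.Icc 1 (2 ^ (κ + 1))).biUnion (fun q =>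
            (Finset.range (2 ^ (4 * κ + 4))).filter (fun ω =>
              (q * ω) % 2 ^ (4 * κ + 3) < 2 ^ (κ - 1) ∨
                2 ^ (4 * κ + 3) < (q * ω) % 2 ^ (4 * κ + 3) + 2 ^ (κ - 1) + q))).card :=
          Finset.card_le_card hsub
      _ ≤ ∑ q ∈ Finset.Icc 1 (2 ^ (κ + 1)), ((Finset.range (2 ^ (4 * κ + 4))).filter (fun ω =>
              (q * ω) % 2 ^ (4 * κ + 3) < 2 ^ (κ - 1) ∨
                2 ^ (4 * κ + 3) < (q * ω) % 2 ^ (4 * κ + 3) + 2 ^ (κ - 1) + q)).card :=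
          Finset.card_biUnion_le
      _ ≤ ∑ _q ∈ Finset.Icc 1 (2 ^ (κ + 1)), 2 ^ (κ + 4) := by
          refine Finset.sum_le_sum ?_
          intro q hq
          rw [Finset.mem_Icc] at hq
          exact step4 κ q hκ hq.1 hq.2
      _ = 2 ^ (κ + 1) * 2 ^ (κ + 4) := by
          rw [Finset.sum_const, smul_eq_mul, Nat.card_Icc, Nat.add_sub_cancel]
  have htot : ((Finset.range (2 ^ (4 * κ + 4))).filter (fun ω =>
        ∀ ω₀ < 2 ^ μ, ∃ M, M % 2 = 1 ∧ 1 ≤ M ∧ M < 2 ^ (5 * κ + 7) ∧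
          (M * (2 ^ μ * ω + ω₀)) / 2 ^ (μ + 3 * κ + 4) % 2 ^ κ = 0)).card
      + ((Finset.range (2 ^ (4 * κ + 4))).filter (fun ω =>
        ¬ (∀ ω₀ < 2 ^ μ, ∃ M, M % 2 = 1 ∧ 1 ≤ M ∧ M < 2 ^ (5 * κ + 7) ∧
          (M * (2 ^ μ * ω + ω₀)) / 2 ^ (μ + 3 * κ + 4) % 2 ^ κ = 0))).card
      = 2 ^ (4 * κ + 4) := by
    rw [Finset.card_filter_add_card_filter_not, Finset.card_range]
  have e1 : (2:ℕ) ^ (3 * κ + 4) * 2 ^ κ = 2 ^ (4 * κ + 4) := by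
    rw [← pow_add]; try (congr 1 <;> omega)
  have e2 : (2:ℕ) ^ (κ + 1) * 2 ^ (κ + 4) = 2 ^ (2 * κ + 5) := by
    rw [← pow_add]; try (congr 1 <;> omega)
  have e3 : (2:ℕ) ^ (2 * κ + 5) ≤ 2 ^ (3 * κ + 4) :=
    Nat.pow_le_pow_right (by norm_num) (by omega)
  have e4 : (2:ℕ) ^ (3 * κ + 4) * (2 ^ κ - 1) = 2 ^ (3 * κ + 4) * 2 ^ κ - 2 ^ (3 * κ + 4) := by
    rw [Nat.mul_sub, mul_one]
  omega
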